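/- Every regular ring is left locally unital: if R is an associative ring such that for every r ∈ R there exists s ∈ R with r = r·s·r, then for every finite list r₁,…,rₙ ∈ R there exists an idempotent e ∈ R with e·rᵢ = rᵢ for all i. -/

import Mathlib

/-- Every regular ring is left locally unital. -/
theorem stmt12 {R : Type*} [NonUnitalRing R]
    (hreg : ∀ r : R, ∃ s : R, r = r * s * r) :
    ∀ L : List R, ∃ e : R, e * e = e ∧ ∀ r ∈ L, e * r = r := by
  intro L
  induction L with
  | nil => exact ⟨0, by simp, by simp⟩
  | cons a L ih =>
    obtain ⟨e, he, hL⟩ := ih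
    set a' : R := a - e * a with ha'
    obtain ⟨s, hs⟩ := hreg a'
    have hea' : e * a' = 0 := by
      rw [ha', mul_sub, ← mul_assoc, he, sub_self]
    set f : R := a' * s - a' * s * e with hf
    have hef : e * f = 0 := by
      simp only [hf, mul_sub, ← mul_assoc, hea', zero_mul, sub_self]
    have hfe : f * e = 0 := by
      rw [hf, sub_mul, mul_assoc (a' * s) e e, he, sub_self]
    have hfa' : f * a' = a' := by
      rw [hf, sub_mul, ← hs, mul_assoc (a' * s) e a', hea', mul_zero, sub_zero]
    have hff : f * f = f := by
      nth_rewrite 2 [hf]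
      rw [mul_sub]
      simp only [← mul_assoc, hfa']
      exact hf.symm
    have hfa : f * a = a' := by
      have : a = a' + e * a := by rw [ha', sub_add_cancel]
      rw [this, mul_add, hfa', ← mul_assoc, hfe, zero_mul, add_zero]
    refine ⟨e + f, ?_, ?_⟩
    · rw [add_mul, mul_add, mul_add, he, hef, hfe, hff, add_zero, zero_add]
    · intro r hr
      rcases List.mem_cons.mp hr with h | h
      · subst h
        rw [add_mul, hfa, ha', add_sub_cancel]
      · have her : e * r = r := hL r h
        rw [add_mul, her, ← her, ← mul_assoc, hfe, zero_mul, her, add_zero]
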